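/- arXiv:1408.2418 — 6 statements merged into one kernel-verified Lean document; each statement's English description precedes it below -/
import Mathlib

section
/- Let n ≥ 2, w = se^{iψ} with 0 ≤ s < 1, and B(z) = ((z−w)/(1−w̄z))ⁿ. Define K = {e^{iφ} : |B'(e^{iφ})| ≤ 1}. Then K is empty if s < (n−1)/(n+1), K = {e^{i(ψ+π)}} if s = (n−1)/(n+1), and if s > (n−1)/(n+1) then K = {e^{iφ} : cos(φ−ψ) ≤ t(s)} where t(s) = (1−n+(1+n)s²)/(2s), which is a nondegenerate closed arc of the unit circle centered at e^{i(ψ+π)}. -/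
open Complex

lemma derivB (n : ℕ) (w z : ℂ) (hz : 1 - (starRingEnd ℂ) w * z ≠ 0) :
    deriv (fun z => ((z - w) / (1 - (starRingEnd ℂ) w * z)) ^ n) z
      = n * ((z - w) / (1 - (starRingEnd ℂ) w * z)) ^ (n - 1)
        * ((1 - (starRingEnd ℂ) w * w) / (1 - (starRingEnd ℂ) w * z) ^ 2) := by
  have h1 : HasDerivAt (fun z : ℂ => z - w) 1 z := (hasDerivAt_id z).sub_const w
  have h2 : HasDerivAt (fun z : ℂ => 1 - (starRingEnd ℂ) w * z) (-(starRingEnd ℂ) w) z := by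
    simpa using ((hasDerivAt_id z).const_mul ((starRingEnd ℂ) w)).const_sub 1
  have h3 := (h1.div h2 hz)
  have h4 := h3.pow n
  rw [show (fun z => ((z - w) / (1 - (starRingEnd ℂ) w * z)) ^ n) = ((fun z => z - w) / fun z => 1 - (starRingEnd ℂ) w * z) ^ n from rfl, h4.deriv]
  simp only [Pi.div_apply]
  ring_nf

lemma absfac (s ψ φ : ℝ) (hs : 0 ≤ s) :
    ‖1 - (starRingEnd ℂ) ((s:ℂ) * Complex.exp (ψ * I)) * Complex.exp (φ * I)‖ ^ 2
      = 1 + s^2 - 2*s*Real.cos (φ - ψ) := by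
  rw [Complex.sq_norm]
  have : (starRingEnd ℂ) ((s:ℂ) * Complex.exp (ψ * I)) * Complex.exp (φ * I)
      = (s:ℂ) * Complex.exp (((φ - ψ : ℝ)) * I) := by
    rw [map_mul, Complex.conj_ofReal, ← Complex.exp_conj, map_mul, Complex.conj_I,
      Complex.conj_ofReal, mul_assoc, ← Complex.exp_add]
    congr 2
    push_cast
    ring
  rw [this, Complex.normSq_apply]
  have hre : (Complex.exp ((↑(φ - ψ):ℂ) * I)).re = Real.cos (φ - ψ) :=
    Complex.exp_ofReal_mul_I_re _
  have him : (Complex.exp ((↑(φ - ψ):ℂ) * I)).im = Real.sin (φ - ψ) :=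
    Complex.exp_ofReal_mul_I_im _
  simp only [Complex.sub_re, Complex.sub_im, Complex.mul_re, Complex.mul_im,
    Complex.ofReal_re, Complex.ofReal_im, Complex.one_re, Complex.one_im, hre, him]
  have h := Real.sin_sq_add_cos_sq (φ - ψ)
  nlinarith [h]

lemma absderivB (n : ℕ) (s ψ φ : ℝ) (hs : 0 ≤ s) (hs1 : s < 1) :
    ‖deriv (fun z => ((z - ((s:ℂ) * Complex.exp (ψ * I))) /
        (1 - (starRingEnd ℂ) ((s:ℂ) * Complex.exp (ψ * I)) * z)) ^ n) (Complex.exp (φ * I))‖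
      = n * (1 - s^2) / (1 + s^2 - 2*s*Real.cos (φ - ψ)) := by
  set w : ℂ := (s:ℂ) * Complex.exp (ψ * I) with hwdef
  set z : ℂ := Complex.exp (φ * I) with hzdef
  have hz1 : ‖z‖ = 1 := Complex.norm_exp_ofReal_mul_I φ
  have hwabs : ‖w‖ = s := by
    rw [hwdef, norm_mul, Complex.norm_real, Complex.norm_exp_ofReal_mul_I, Real.norm_of_nonneg hs]
    ring
  have hden : 1 - (starRingEnd ℂ) w * z ≠ 0 := by
    intro h
    have h2 : (starRingEnd ℂ) w * z = 1 := by linear_combination -h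
    have := congrArg (‖·‖) h2
    rw [norm_mul, Complex.norm_conj, hwabs, hz1, mul_one, norm_one] at this
    linarith
  rw [derivB n w z hden]
  have hzz : z * (starRingEnd ℂ) z = 1 := by
    rw [Complex.mul_conj]
    norm_cast
    rw [← Complex.sq_norm, hz1]; norm_num
  have habs1 : ‖z - w‖ = ‖1 - (starRingEnd ℂ) w * z‖ := by
    have key : z - w = z * (starRingEnd ℂ) (1 - (starRingEnd ℂ) w * z) := by
      rw [map_sub, map_one, map_mul, Complex.conj_conj]
      linear_combination w * hzz
    rw [key, norm_mul, hz1, one_mul, Complex.norm_conj]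
  have hww : (1 : ℂ) - (starRingEnd ℂ) w * w = ((1 - s^2 : ℝ) : ℂ) := by
    rw [Complex.conj_mul', hwabs]
    push_cast; ring
  rw [norm_mul, norm_mul, norm_div, norm_pow, norm_div, habs1, hww]
  rw [div_self (by simpa [habs1] using (norm_ne_zero_iff.mpr hden))]
  have hfac := absfac s ψ φ hs
  rw [← hwdef, ← hzdef] at hfac
  rw [one_pow, mul_one, Complex.norm_natCast, Complex.norm_real,
    Real.norm_of_nonneg (by nlinarith : (0:ℝ) ≤ 1 - s^2), norm_pow, hfac]
  ring

theorem stmt_6 (n : ℕ) (hn : 2 ≤ n) (s ψ : ℝ) (hs : 0 ≤ s) (hs1 : s < 1)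
    (w : ℂ) (hw : w = s * Complex.exp (ψ * I))
    (B : ℂ → ℂ)
    (hB : B = fun z => ((z - w) / (1 - (starRingEnd ℂ) w * z)) ^ n)
    (K : Set ℂ)
    (hK : K = {z : ℂ | ‖z‖ = 1 ∧ ‖deriv B z‖ ≤ 1}) :
    (s < ((n : ℝ) - 1) / ((n : ℝ) + 1) → K = ∅) ∧
      (s = ((n : ℝ) - 1) / ((n : ℝ) + 1) → K = {Complex.exp ((ψ + Real.pi) * I)}) ∧
      (((n : ℝ) - 1) / ((n : ℝ) + 1) < s →
        K = {z : ℂ | ∃ φ : ℝ, z = Complex.exp (φ * I) ∧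
              Real.cos (φ - ψ) ≤ (1 - n + (1 + n) * s ^ 2) / (2 * s)} ∧
          Complex.exp ((ψ + Real.pi) * I) ∈ K) := by
  have hn2 : (2:ℝ) ≤ (n:ℝ) := by exact_mod_cast hn
  have hnp : (0:ℝ) < (n:ℝ) + 1 := by linarith
  have hpos : ∀ φ : ℝ, 0 < 1 + s^2 - 2*s*Real.cos (φ - ψ) := by
    intro φ
    nlinarith [Real.cos_le_one (φ - ψ)]
  have hcond : ∀ φ : ℝ, (‖deriv B (Complex.exp (φ * I))‖ ≤ 1 ↔
      (n:ℝ)*(1-s^2) ≤ 1 + s^2 - 2*s*Real.cos (φ - ψ)) := by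
    intro φ
    rw [hB, hw, absderivB n s ψ φ hs hs1, div_le_one (hpos φ)]
  have hmem : ∀ z : ℂ, z ∈ K ↔ ∃ φ : ℝ, z = Complex.exp (φ * I) ∧
      (n:ℝ)*(1-s^2) ≤ 1 + s^2 - 2*s*Real.cos (φ - ψ) := by
    intro z
    rw [hK]
    constructor
    · rintro ⟨h1, h2⟩
      obtain ⟨φ, hφ⟩ := (Complex.norm_eq_one_iff z).mp h1
      exact ⟨φ, hφ.symm, (hcond φ).mp (hφ ▸ h2)⟩
    · rintro ⟨φ, rfl, h⟩
      exact ⟨Complex.norm_exp_ofReal_mul_I φ, (hcond φ).mpr h⟩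
  refine ⟨?_, ?_, ?_⟩
  · -- s < (n-1)/(n+1)
    intro h1
    have h1' : s * ((n:ℝ)+1) < (n:ℝ)-1 := (lt_div_iff₀ hnp).mp h1
    ext z
    simp only [Set.mem_empty_iff_false, iff_false]
    intro hz
    obtain ⟨φ, rfl, h⟩ := (hmem z).mp hz
    nlinarith [Real.neg_one_le_cos (φ - ψ), sq_nonneg (1+s)]
  · -- s = (n-1)/(n+1)
    intro h2
    have hseq : s * ((n:ℝ)+1) = (n:ℝ)-1 := by
      rw [h2]; field_simp
    have hs0 : 0 < s := by
      rw [h2]; apply div_pos <;> linarith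
    have hexpψπ : Complex.exp (((ψ:ℂ) + (Real.pi:ℂ)) * I) = Complex.exp (ψ * I) * (-1) := by
      rw [add_mul, Complex.exp_add, Complex.exp_pi_mul_I]
    ext z
    simp only [Set.mem_singleton_iff]
    rw [hmem z]
    constructor
    · rintro ⟨φ, rfl, h⟩
      have hcle : Real.cos (φ - ψ) ≤ -1 := by nlinarith
      have hc : Real.cos (φ - ψ) = -1 := le_antisymm hcle (Real.neg_one_le_cos _)
      have hsin : Real.sin (φ - ψ) = 0 := by
        have := Real.sin_sq_add_cos_sq (φ - ψ)
        nlinarith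
      have he : Complex.exp ((↑(φ - ψ) : ℂ) * I) = -1 := by
        rw [Complex.exp_mul_I, ← Complex.ofReal_cos, ← Complex.ofReal_sin, hc, hsin]
        push_cast; ring
      have : Complex.exp ((φ:ℂ) * I) = Complex.exp (ψ * I) * Complex.exp ((↑(φ - ψ) : ℂ) * I) := by
        rw [← Complex.exp_add]
        congr 1
        push_cast; ring
      rw [this, he, hexpψπ]
    · rintro rfl
      refine ⟨ψ + Real.pi, by norm_cast, ?_⟩
      have : ψ + Real.pi - ψ = Real.pi := by ring
      rw [this, Real.cos_pi]
      nlinarith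
  · -- (n-1)/(n+1) < s
    intro h3
    have hs0 : 0 < s := lt_of_le_of_lt (div_nonneg (by linarith) (by linarith)) h3
    have h3' : (n:ℝ)-1 < s * ((n:ℝ)+1) := (div_lt_iff₀ hnp).mp h3
    have key : ∀ c : ℝ, ((n:ℝ)*(1-s^2) ≤ 1 + s^2 - 2*s*c ↔
        c ≤ (1 - (n:ℝ) + (1 + (n:ℝ)) * s ^ 2) / (2 * s)) := by
      intro c
      rw [le_div_iff₀ (by positivity : (0:ℝ) < 2*s)]
      constructor <;> intro <;> nlinarith
    constructor
    · ext z
      rw [hmem z]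
      simp only [Set.mem_setOf_eq]
      exact exists_congr fun φ => and_congr_right fun _ => key _
    · rw [hmem]
      refine ⟨ψ + Real.pi, by norm_cast, ?_⟩
      have : ψ + Real.pi - ψ = Real.pi := by ring
      rw [this, Real.cos_pi]
      nlinarith
end

section
/- Let n ≥ 2, (n−1)/(n+1) ≤ s < 1, w = se^{iψ}, and A(z) = (z−w)/(1−w̄z). If e^{iφ} satisfies cos(φ−ψ) = t(s) = (1−n+(1+n)s²)/(2s), then the real part of e^{−iψ}A(e^{iφ}) equals u(s) = (1−n−(1+n)s²)/(2ns). -/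
open Complex

theorem stmt_8 (n : ℕ) (hn : 2 ≤ n) (s ψ : ℝ)
    (hs : ((n : ℝ) - 1) / ((n : ℝ) + 1) ≤ s) (hs1 : s < 1)
    (w : ℂ) (hw : w = s * Complex.exp (ψ * I))
    (A : ℂ → ℂ) (hA : A = fun z => (z - w) / (1 - (starRingEnd ℂ) w * z))
    (φ : ℝ) (hφ : Real.cos (φ - ψ) = (1 - n + (1 + n) * s ^ 2) / (2 * s)) :
    (Complex.exp (-ψ * I) * A (Complex.exp (φ * I))).re =
      (1 - n - (1 + n) * s ^ 2) / (2 * n * s) := by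
  have hn2 : (2:ℝ) ≤ (n:ℝ) := by exact_mod_cast hn
  have hspos : 0 < s := lt_of_lt_of_le (div_pos (by linarith) (by linarith)) hs
  subst hw hA
  set θ : ℝ := φ - ψ with hθ
  have hden : (1 : ℂ) - s * Complex.exp (θ * I) ≠ 0 := by
    intro h
    have h1 : (s : ℂ) * Complex.exp (θ * I) = 1 := by linear_combination -h
    have := congrArg (fun z : ℂ => ‖z‖) h1
    simp [Complex.norm_exp, abs_of_pos hspos] at this
    linarith [this]
  have he : Complex.exp (θ * I) = Complex.exp (φ * I) * Complex.exp (-ψ * I) := by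
    rw [← Complex.exp_add]; congr 1; push_cast [hθ]; ring
  have key : Complex.exp (-ψ * I) *
      ((Complex.exp (φ * I) - (s : ℂ) * Complex.exp (ψ * I)) /
        (1 - (starRingEnd ℂ) ((s:ℂ) * Complex.exp (ψ * I)) * Complex.exp (φ * I)))
      = (Complex.exp (θ * I) - s) / (1 - s * Complex.exp (θ * I)) := by
    have hc : (starRingEnd ℂ) ((s:ℂ) * Complex.exp (ψ * I)) = s * Complex.exp (-ψ * I) := by
      simp [← Complex.exp_conj, map_mul, Complex.conj_ofReal]
    have hinv : Complex.exp (-ψ*I) * Complex.exp (ψ*I) = 1 := by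
      rw [← Complex.exp_add]; norm_num
    have hnum : Complex.exp (-ψ*I) * (Complex.exp (φ*I) - (s:ℂ)*Complex.exp (ψ*I))
        = Complex.exp (φ*I) * Complex.exp (-ψ*I) - s := by
      linear_combination (-(s:ℂ)) * hinv
    rw [hc, mul_div_assoc', hnum, he]
    congr 1
    ring
  simp only [key]
  rw [Complex.div_re]
  simp only [Complex.normSq_apply, Complex.sub_re, Complex.sub_im, Complex.mul_re, Complex.mul_im,
    Complex.ofReal_re, Complex.ofReal_im, Complex.one_re, Complex.one_im,
    Complex.exp_ofReal_mul_I_re, Complex.exp_ofReal_mul_I_im]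
  set c := Real.cos θ with hc0
  set t := Real.sin θ with ht0
  have ht : t ^ 2 = 1 - c ^ 2 := by
    have := Real.sin_sq_add_cos_sq θ; rw [← hc0, ← ht0] at this; linarith
  have hc : 2 * s * c = 1 - (n:ℝ) + (1 + (n:ℝ)) * s ^ 2 := by
    rw [hφ]; field_simp
  have hs2 : s ^ 2 < 1 := by nlinarith
  have hDpos : (0:ℝ) < (n:ℝ) * (1 - s ^ 2) := by nlinarith
  have hD : (1 - (s * c - 0 * t)) * (1 - (s * c - 0 * t)) +
      (0 - (s * t + 0 * c)) * (0 - (s * t + 0 * c)) = (n:ℝ) * (1 - s ^ 2) := by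
    linear_combination s ^ 2 * ht - hc
  rw [← add_div, hD, div_eq_div_iff (ne_of_gt hDpos) (by positivity)]
  linear_combination ((n:ℝ) * (1 + s ^ 2)) * hc - 2 * (n:ℝ) * s ^ 2 * ht
end

section
/- Let n ≥ 2. Define p(s) = 2π − 2 arccos(t(s)) and q(s) = n(2π − 2 arccos(u(s))) for s ∈ ((n−1)/(n+1), 1), where t(s) = (1−n+(1+n)s²)/(2s) and u(s) = (1−n−(1+n)s²)/(2ns). Then p'(s) > q'(s) for all s in this interval. -/
set_option maxHeartbeats 800000 in
theorem stmt_11 (n : ℕ) (hn : 2 ≤ n)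
    (t u p q : ℝ → ℝ)
    (ht : t = fun s : ℝ => (1 - (n : ℝ) + (1 + (n : ℝ)) * s ^ 2) / (2 * s))
    (hu : u = fun s : ℝ => (1 - (n : ℝ) - (1 + (n : ℝ)) * s ^ 2) / (2 * (n : ℝ) * s))
    (hp : p = fun s : ℝ => 2 * Real.pi - 2 * Real.arccos (t s))
    (hq : q = fun s : ℝ => (n : ℝ) * (2 * Real.pi - 2 * Real.arccos (u s))) :
    ∀ s ∈ Set.Ioo (((n : ℝ) - 1) / ((n : ℝ) + 1)) 1, deriv q s < deriv p s := by
  subst ht hu hp hq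
  intro s hs
  obtain ⟨hs1, hs2⟩ := hs
  have hn' : (2 : ℝ) ≤ (n : ℝ) := by exact_mod_cast hn
  set N : ℝ := (n : ℝ) with hN
  have hb : (0 : ℝ) < N + 1 := by linarith
  have ha : (0 : ℝ) < N - 1 := by linarith
  have hNpos : (0 : ℝ) < N := by linarith
  have hs0 : 0 < s := lt_trans (div_pos ha hb) hs1
  have hsa : N - 1 < s * (N + 1) := (div_lt_iff₀ hb).mp hs1
  -- values at s
  set T : ℝ := (1 - N + (1 + N) * s ^ 2) / (2 * s) with hT
  set U : ℝ := (1 - N - (1 + N) * s ^ 2) / (2 * N * s) with hU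
  have h2s : (0:ℝ) < 2 * s := by linarith
  have h2Ns : (0:ℝ) < 2 * N * s := by positivity
  have hT1 : T < 1 := by
    rw [hT, div_lt_one h2s]
    nlinarith [mul_pos (sub_pos.mpr hs2) (by linarith : 0 < s * (N + 1) - (N - 1))]
  have hTm1 : -1 < T := by
    rw [hT, lt_div_iff₀ h2s]
    nlinarith [mul_pos (by linarith : (0:ℝ) < s + 1) (by linarith : 0 < s * (N + 1) - (N - 1))]
  have hU1 : U < 1 := by
    rw [hU, div_lt_one h2Ns]
    nlinarith
  have hUm1 : -1 < U := by
    rw [hU, lt_div_iff₀ h2Ns]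
    nlinarith [mul_pos (sub_pos.mpr hs2) (by linarith : 0 < s * (N + 1) - (N - 1))]
  have hTsq : 0 < 1 - T ^ 2 := by nlinarith
  have hUsq : 0 < 1 - U ^ 2 := by nlinarith
  set A : ℝ := Real.sqrt (1 - T ^ 2) with hA
  have hApos : 0 < A := Real.sqrt_pos.mpr hTsq
  -- derivatives of t and u
  have hts : HasDerivAt (fun x : ℝ => (1 - N + (1 + N) * x ^ 2) / (2 * x))
      ((((1 + N) * (2 * s)) * (2 * s) - (1 - N + (1 + N) * s ^ 2) * 2) / (2 * s) ^ 2) s := by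
    have h1 : HasDerivAt (fun x : ℝ => 1 - N + (1 + N) * x ^ 2) ((1 + N) * (2 * s)) s := by
      have := ((hasDerivAt_pow 2 s).const_mul (1 + N)).const_add (1 - N)
      simpa using this
    have h2 : HasDerivAt (fun x : ℝ => 2 * x) 2 s := by
      simpa using (hasDerivAt_id s).const_mul 2
    exact h1.div h2 (by positivity)
  have hus : HasDerivAt (fun x : ℝ => (1 - N - (1 + N) * x ^ 2) / (2 * N * x))
      (((-((1 + N) * (2 * s))) * (2 * N * s) - (1 - N - (1 + N) * s ^ 2) * (2 * N)) / (2 * N * s) ^ 2) s := by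
    have h1 : HasDerivAt (fun x : ℝ => 1 - N - (1 + N) * x ^ 2) (-((1 + N) * (2 * s))) s := by
      have := ((hasDerivAt_pow 2 s).const_mul (1 + N)).const_sub (1 - N)
      simpa using this
    have h2 : HasDerivAt (fun x : ℝ => 2 * N * x) (2 * N) s := by
      simpa using (hasDerivAt_id s).const_mul (2 * N)
    exact h1.div h2 (by positivity)
  set dt : ℝ := (((1 + N) * (2 * s)) * (2 * s) - (1 - N + (1 + N) * s ^ 2) * 2) / (2 * s) ^ 2 with hdt
  set du : ℝ := ((-((1 + N) * (2 * s))) * (2 * N * s) - (1 - N - (1 + N) * s ^ 2) * (2 * N)) / (2 * N * s) ^ 2 with hdu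
  -- arccos compositions
  have hact : HasDerivAt (fun x : ℝ => Real.arccos ((1 - N + (1 + N) * x ^ 2) / (2 * x)))
      (-(1 / Real.sqrt (1 - T ^ 2)) * dt) s :=
    by have h := (Real.hasDerivAt_arccos (ne_of_gt hTm1) (ne_of_lt hT1)).comp s hts; exact h
  have hacu : HasDerivAt (fun x : ℝ => Real.arccos ((1 - N - (1 + N) * x ^ 2) / (2 * N * x)))
      (-(1 / Real.sqrt (1 - U ^ 2)) * du) s :=
    by have h := (Real.hasDerivAt_arccos (ne_of_gt hUm1) (ne_of_lt hU1)).comp s hus; exact h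
  have hps : HasDerivAt (fun x : ℝ => 2 * Real.pi - 2 * Real.arccos ((1 - N + (1 + N) * x ^ 2) / (2 * x)))
      (0 - 2 * (-(1 / Real.sqrt (1 - T ^ 2)) * dt)) s :=
    (hasDerivAt_const s (2 * Real.pi)).sub (hact.const_mul 2)
  have hqs : HasDerivAt (fun x : ℝ => N * (2 * Real.pi - 2 * Real.arccos ((1 - N - (1 + N) * x ^ 2) / (2 * N * x))))
      (N * (0 - 2 * (-(1 / Real.sqrt (1 - U ^ 2)) * du))) s :=
    ((hasDerivAt_const s (2 * Real.pi)).sub (hacu.const_mul 2)).const_mul N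
  rw [hps.deriv]
  rw [hqs.deriv]
  -- relate the square roots
  have hrel : 1 - U ^ 2 = (1 - T ^ 2) / N ^ 2 := by
    rw [hT, hU]
    field_simp
    ring
  have hsqrtU : Real.sqrt (1 - U ^ 2) = A / N := by
    rw [hrel, Real.sqrt_div hTsq.le, Real.sqrt_sq hNpos.le]
  rw [hsqrtU]
  clear_value N T U A dt du
  rw [← hA]
  have hs2pos : (0:ℝ) < 2 * s ^ 2 := by positivity
  have key : N ^ 2 * du < dt := by
    have e1 : dt = ((1 + N) * s ^ 2 + (N - 1)) / (2 * s ^ 2) := by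
      rw [hdt]; field_simp; ring
    have e2 : N ^ 2 * du = (N * ((N - 1) - (1 + N) * s ^ 2)) / (2 * s ^ 2) := by
      rw [hdu]; field_simp; ring
    rw [e1, e2, div_lt_div_iff₀ hs2pos hs2pos]
    have h1 : (0:ℝ) < s * (N + 1) - (N - 1) := by linarith
    have h2 : (0:ℝ) < s * (N + 1) + (N - 1) := by nlinarith [mul_pos hs0 hb]
    nlinarith [mul_pos hs2pos (mul_pos h1 h2)]
  have eL : N * (0 - 2 * (-(1 / (A / N)) * du)) = 2 * (N ^ 2 * du) / A := by
    field_simp; ring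
  have eR : 0 - 2 * (-(1 / A) * dt) = 2 * dt / A := by
    field_simp
    ring
  rw [eL, eR, div_lt_div_iff₀ hApos hApos]
  nlinarith [mul_pos (sub_pos.mpr key) hApos]
end

section
/- Let n ≥ 2, w ∈ 𝔻, B_w(z) = ((z−w)/(1−w̄z))ⁿ, and let M(z) = e^{iβ}z be a rotation. If M ∘ B_w ∘ M^{−1} = B_{w'} for some w' ∈ 𝔻, then e^{i(n−1)β} = 1 and w' = e^{iβ}w; i.e., two normalized unicritical Blaschke products B_w and B_{w'} are conjugate by a rotation only if w' = ζw for some (n−1)-th root of unity ζ. -/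
open Complex

theorem stmt_17 (n : ℕ) (hn : 2 ≤ n) (w w' : ℂ)
    (hw : ‖w‖ < 1) (hw' : ‖w'‖ < 1) (β : ℝ)
    (Bw Bw' : ℂ → ℂ)
    (hBw : Bw = fun z => ((z - w) / (1 - (starRingEnd ℂ) w * z)) ^ n)
    (hBw' : Bw' = fun z => ((z - w') / (1 - (starRingEnd ℂ) w' * z)) ^ n)
    (hconj : ∀ z : ℂ, ‖z‖ < 1 →
        Complex.exp (β * I) * Bw (Complex.exp (-β * I) * z) = Bw' z) :
    Complex.exp (((n : ℂ) - 1) * β * I) = 1 ∧ w' = Complex.exp (β * I) * w := by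
  set e := Complex.exp (↑β * I) with he
  have hene : e ≠ 0 := Complex.exp_ne_zero _
  have habse : ‖e‖ = 1 := by
    rw [he, Complex.norm_exp]; simp
  have hinv : Complex.exp (-↑β * I) = e⁻¹ := by
    rw [he, ← Complex.exp_neg]; ring_nf
  have hconje : (starRingEnd ℂ) e = e⁻¹ := by
    rw [he, ← Complex.exp_conj, ← Complex.exp_neg]
    congr 1
    simp [Complex.conj_ofReal]
  -- Step 1 : w' = e * w
  have h1 := hconj (e * w) (by rw [norm_mul, habse, one_mul]; exact hw)
  rw [hBw, hBw', hinv] at h1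
  simp only at h1
  have hew : e⁻¹ * (e * w) = w := by field_simp
  rw [hew] at h1
  have hden : 1 - (starRingEnd ℂ) w' * (e * w) ≠ 0 := by
    intro h
    have h2 : ‖(starRingEnd ℂ) w' * (e * w)‖ = 1 := by
      have : (starRingEnd ℂ) w' * (e * w) = 1 := by linear_combination -h
      rw [this]; simp
    rw [norm_mul, norm_mul, Complex.norm_conj, habse, one_mul] at h2
    nlinarith [norm_nonneg w, norm_nonneg w']
  have hzero : ((e * w - w') / (1 - (starRingEnd ℂ) w' * (e * w))) ^ n = 0 := by
    rw [← h1, sub_self, zero_div, zero_pow (by omega : n ≠ 0), mul_zero]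
  have hnum : e * w - w' = 0 := by
    have := pow_eq_zero_iff (n := n) (by omega) |>.mp hzero
    rcases div_eq_zero_iff.mp this with h | h
    · exact h
    · exact absurd h hden
  have hw'eq : w' = e * w := by linear_combination -hnum
  refine ⟨?_, hw'eq⟩
  -- Step 2 : e^(n-1) = 1
  set z₀ : ℂ := if w' = 0 then (1/2 : ℂ) else 0 with hz₀
  have hz₀abs : ‖z₀‖ < 1 := by
    rw [hz₀]; split <;> simp <;> norm_num
  have hz₀ne : z₀ ≠ w' := by
    rw [hz₀]; split
    · simp_all
    · intro h; simp_all
  have hD : 1 - (starRingEnd ℂ) w' * z₀ ≠ 0 := by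
    intro h
    have h2 : ‖(starRingEnd ℂ) w' * z₀‖ = 1 := by
      have : (starRingEnd ℂ) w' * z₀ = 1 := by linear_combination -h
      rw [this]; simp
    rw [norm_mul, Complex.norm_conj] at h2
    nlinarith [norm_nonneg w', norm_nonneg z₀, hz₀abs]
  have hB : ((z₀ - w') / (1 - (starRingEnd ℂ) w' * z₀)) ^ n ≠ 0 := by
    apply pow_ne_zero
    apply div_ne_zero _ hD
    exact sub_ne_zero.mpr hz₀ne
  have h2 := hconj z₀ hz₀abs
  rw [hBw, hBw', hinv] at h2
  simp only at h2
  -- rewrite LHS inner fraction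
  have hnum2 : e⁻¹ * z₀ - w = e⁻¹ * (z₀ - w') := by
    rw [hw'eq]; field_simp
  have hden2 : 1 - (starRingEnd ℂ) w * (e⁻¹ * z₀) = 1 - (starRingEnd ℂ) w' * z₀ := by
    rw [hw'eq, map_mul, hconje]
    field_simp
  rw [hnum2, hden2, mul_div_assoc, mul_pow] at h2
  have key : e * (e⁻¹) ^ n = 1 := by
    refine mul_right_cancel₀ hB ?_
    rw [one_mul, mul_assoc]
    exact h2
  have hpow : e ^ (n - 1) = 1 := by
    have hen : e = e ^ n := by
      have := key
      have h3 : e ^ n * e⁻¹ ^ n = 1 := by rw [← mul_pow, mul_inv_cancel₀ hene, one_pow]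
      linear_combination e ^ n * this - e * h3
    have : e ^ (n - 1) * e = 1 * e := by
      rw [one_mul, ← pow_succ]
      have : n - 1 + 1 = n := by omega
      rw [this, ← hen]
    exact mul_right_cancel₀ hene this
  calc Complex.exp (((n : ℂ) - 1) * ↑β * I)
      = Complex.exp (((n - 1 : ℕ) : ℂ) * (↑β * I)) := by
        congr 1
        push_cast [Nat.cast_sub (by omega : 1 ≤ n)]
        ring
    _ = e ^ (n - 1) := by rw [Complex.exp_nat_mul, he]
    _ = 1 := hpow
end

section
/- Let n ≥ 2, w ∈ 𝔻, B(z) = ((z−w)/(1−w̄z))ⁿ, and let A be a Möbius transformation of the disk such that A ∘ B ∘ A^{−1} is also of the form ((z−w')/(1−w̄'z))ⁿ for some w' ∈ 𝔻. Then A(0) = 0, i.e., A is a rotation. -/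
open Complex

lemma den_ne_aux (a z : ℂ) (ha : ‖a‖ < 1) (hz : ‖z‖ < 1) :
    1 - (starRingEnd ℂ) a * z ≠ 0 := by
  intro h
  have h1 : (starRingEnd ℂ) a * z = 1 := by linear_combination -h
  have : ‖(starRingEnd ℂ) a * z‖ < 1 := by
    rw [norm_mul, Complex.norm_conj]
    nlinarith [norm_nonneg a, norm_nonneg z]
  rw [h1] at this; simp at this

lemma mob_lt_aux (a z : ℂ) (ha : ‖a‖ < 1) (hz : ‖z‖ < 1) :
    ‖(z - a) / (1 - (starRingEnd ℂ) a * z)‖ < 1 := by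
  have hden := den_ne_aux a z ha hz
  have hdpos : 0 < ‖1 - (starRingEnd ℂ) a * z‖ := by
    simpa [norm_pos_iff] using hden
  rw [norm_div, div_lt_one hdpos]
  have key : Complex.normSq (1 - (starRingEnd ℂ) a * z) - Complex.normSq (z - a)
      = (1 - Complex.normSq a) * (1 - Complex.normSq z) := by
    simp [Complex.normSq_apply, Complex.sub_re, Complex.sub_im, Complex.mul_re,
      Complex.mul_im, Complex.conj_re, Complex.conj_im, Complex.one_re, Complex.one_im]
    ring
  have ha2 : Complex.normSq a < 1 := by
    rw [← Complex.sq_norm] at *; nlinarith [norm_nonneg a]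
  have hz2 : Complex.normSq z < 1 := by
    rw [← Complex.sq_norm]; nlinarith [norm_nonneg z]
  have : Complex.normSq (z - a) < Complex.normSq (1 - (starRingEnd ℂ) a * z) := by
    nlinarith
  rw [← Complex.sq_norm, ← Complex.sq_norm] at this
  nlinarith [norm_nonneg (z - a), norm_nonneg (1 - (starRingEnd ℂ) a * z)]

lemma mob_deriv_aux (a z : ℂ) (h : 1 - (starRingEnd ℂ) a * z ≠ 0) :
    HasDerivAt (fun z => (z - a) / (1 - (starRingEnd ℂ) a * z))
      ((1 - (Complex.normSq a : ℂ)) / (1 - (starRingEnd ℂ) a * z) ^ 2) z := by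
  have hnum : HasDerivAt (fun z : ℂ => z - a) 1 z := (hasDerivAt_id z).sub_const a
  have hden : HasDerivAt (fun z : ℂ => 1 - (starRingEnd ℂ) a * z) (-(starRingEnd ℂ) a) z := by
    simpa using ((hasDerivAt_id z).const_mul ((starRingEnd ℂ) a)).const_sub 1
  have := hnum.div hden h
  refine this.congr_deriv ?_
  have : (starRingEnd ℂ) a * a = (Complex.normSq a : ℂ) := by
    rw [mul_comm, Complex.mul_conj]
  rw [div_eq_div_iff (pow_ne_zero 2 h) (pow_ne_zero 2 h)]
  linear_combination -((1 - (starRingEnd ℂ) a * z) ^ 2) * this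

theorem stmt_18 (n : ℕ) (hn : 2 ≤ n) (w w' : ℂ)
    (hw : ‖w‖ < 1) (hw' : ‖w'‖ < 1)
    (B B' : ℂ → ℂ)
    (hB : B = fun z => ((z - w) / (1 - (starRingEnd ℂ) w * z)) ^ n)
    (hB' : B' = fun z => ((z - w') / (1 - (starRingEnd ℂ) w' * z)) ^ n)
    (A : ℂ → ℂ) (θ : ℝ) (a : ℂ) (ha : ‖a‖ < 1)
    (hA : A = fun z => Complex.exp (θ * I) * ((z - a) / (1 - (starRingEnd ℂ) a * z)))
    (hconj : ∀ z : ℂ, ‖z‖ < 1 → A (B z) = B' (A z)) :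
    A 0 = 0 := by
  have hn0 : n ≠ 0 := by omega
  have hn1 : n - 1 ≠ 0 := by omega
  set u : ℂ := A w with hu
  have hBw : B w = 0 := by simp [hB, zero_pow hn0]
  have hAu : ‖u‖ < 1 := by
    rw [hu, hA]
    simp only
    rw [norm_mul, Complex.norm_exp_ofReal_mul_I, one_mul]
    exact mob_lt_aux a w ha hw
  -- derivative of A ∘ B at w is 0
  have hdenw := den_ne_aux w w hw hw
  have hdB : HasDerivAt B 0 w := by
    rw [hB]
    have := (mob_deriv_aux w w hdenw).pow n
    refine this.congr_deriv ?_
    simp [sub_self, zero_div, zero_pow hn1]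
  have hdena := den_ne_aux a 0 ha (by simp)
  have hdA0 : HasDerivAt A (Complex.exp (θ * I) *
      ((1 - (Complex.normSq a : ℂ)) / (1 - (starRingEnd ℂ) a * 0) ^ 2)) 0 := by
    rw [hA]
    exact (mob_deriv_aux a 0 hdena).const_mul _
  have h1 : HasDerivAt (fun z => A (B z)) 0 w := by
    have := (hBw ▸ hdA0).comp w hdB
    refine this.congr_deriv ?_
    simp
  -- derivative of B' ∘ A at w
  have hdenu := den_ne_aux w' u hw' hAu
  have d1 : ℂ := 0
  have hdB'u : HasDerivAt B' ((n : ℂ) * ((u - w') / (1 - (starRingEnd ℂ) w' * u)) ^ (n - 1) *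
      ((1 - (Complex.normSq w' : ℂ)) / (1 - (starRingEnd ℂ) w' * u) ^ 2)) u := by
    rw [hB']
    exact (mob_deriv_aux w' u hdenu).pow n
  have hdenaw := den_ne_aux a w ha hw
  have hdAw : HasDerivAt A (Complex.exp (θ * I) *
      ((1 - (Complex.normSq a : ℂ)) / (1 - (starRingEnd ℂ) a * w) ^ 2)) w := by
    rw [hA]
    exact (mob_deriv_aux a w hdenaw).const_mul _
  have h2 : HasDerivAt (fun z => B' (A z))
      ((n : ℂ) * ((u - w') / (1 - (starRingEnd ℂ) w' * u)) ^ (n - 1) *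
        ((1 - (Complex.normSq w' : ℂ)) / (1 - (starRingEnd ℂ) w' * u) ^ 2) *
        (Complex.exp (θ * I) * ((1 - (Complex.normSq a : ℂ)) / (1 - (starRingEnd ℂ) a * w) ^ 2))) w :=
    hdB'u.comp w hdAw
  -- the two functions agree near w
  have heq : (fun z => A (B z)) =ᶠ[nhds w] (fun z => B' (A z)) := by
    filter_upwards [Metric.isOpen_ball.mem_nhds (show w ∈ Metric.ball (0:ℂ) 1 by
      simpa [Metric.mem_ball, Complex.dist_eq] using hw)] with z hz
    exact hconj z (by simpa [Metric.mem_ball, Complex.dist_eq] using hz)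
  have h1' : HasDerivAt (fun z => B' (A z)) 0 w := h1.congr_of_eventuallyEq heq.symm
  have hD0 := h2.unique h1'
  -- factor out nonzero factors
  have hsqa : Complex.normSq a < 1 := by
    rw [← Complex.sq_norm]; nlinarith [norm_nonneg a]
  have hsqw' : Complex.normSq w' < 1 := by
    rw [← Complex.sq_norm]; nlinarith [norm_nonneg w']
  have hne1 : ((1 : ℂ) - (Complex.normSq w' : ℂ)) / (1 - (starRingEnd ℂ) w' * u) ^ 2 ≠ 0 := by
    apply div_ne_zero
    · intro h
      have : (Complex.normSq w' : ℂ) = 1 := by linear_combination -h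
      have := Complex.ofReal_inj.mp (by exact_mod_cast this)
      linarith
    · exact pow_ne_zero 2 hdenu
  have hne2 : Complex.exp (θ * I) * ((1 - (Complex.normSq a : ℂ)) /
      (1 - (starRingEnd ℂ) a * w) ^ 2) ≠ 0 := by
    apply mul_ne_zero (Complex.exp_ne_zero _)
    apply div_ne_zero
    · intro h
      have : (Complex.normSq a : ℂ) = 1 := by linear_combination -h
      have := Complex.ofReal_inj.mp (by exact_mod_cast this)
      linarith
    · exact pow_ne_zero 2 hdenaw
  have hpow : ((u - w') / (1 - (starRingEnd ℂ) w' * u)) ^ (n - 1) = 0 := by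
    have hnn : (n : ℂ) ≠ 0 := Nat.cast_ne_zero.mpr hn0
    by_contra hc
    exact (mul_ne_zero (mul_ne_zero (mul_ne_zero hnn hc) hne1) hne2) hD0
  have hfu : (u - w') / (1 - (starRingEnd ℂ) w' * u) = 0 :=
    pow_eq_zero_iff hn1 |>.mp hpow
  have huw' : u = w' := by
    rcases div_eq_zero_iff.mp hfu with h | h
    · linear_combination h
    · exact absurd h (pow_ne_zero 1 hdenu |> fun hh => by simpa using hh)
  -- conclude
  have := hconj w hw
  rw [hBw] at this
  have hAw' : A w = w' := by rw [← hu]; exact huw'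
  rw [this]
  simp [hB', hAw', zero_pow hn0]
end

section
/- Let n ≥ 2 and w ∈ 𝔻 with |w| < (n−1)/(n+1), and let B(z) = ((z−w)/(1−w̄z))ⁿ. Then |B'(z)| > 1 for every z on the unit circle; in particular B has no fixed point z₀ on ∂𝔻 with |B'(z₀)| ≤ 1, so B is elliptic (its Denjoy–Wolff point lies in 𝔻). -/
open Complex

lemma key_ineq {n : ℕ} {w : ℂ} (hn : 2 ≤ n)
    (hw : ‖w‖ < ((n : ℝ) - 1) / ((n : ℝ) + 1)) :
    (1 + ‖w‖)^2 < n * (1 - ‖w‖^2) := by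
  have hn' : (2:ℝ) ≤ n := by exact_mod_cast hn
  have h0 : (0:ℝ) < (n:ℝ) + 1 := by linarith
  have hs0 : 0 ≤ ‖w‖ := norm_nonneg w
  have h1 : ‖w‖ * ((n:ℝ)+1) < (n:ℝ) - 1 := by
    rw [div_eq_mul_inv] at hw
    calc ‖w‖ * ((n:ℝ)+1) < (((n:ℝ)-1) * ((n:ℝ)+1)⁻¹) * ((n:ℝ)+1) := by
          apply mul_lt_mul_of_pos_right hw h0
      _ = (n:ℝ) - 1 := by field_simp
  nlinarith [hs0, sq_nonneg (‖w‖)]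

lemma s_lt_one {n : ℕ} {w : ℂ} (hn : 2 ≤ n)
    (hw : ‖w‖ < ((n : ℝ) - 1) / ((n : ℝ) + 1)) : ‖w‖ < 1 := by
  have hn' : (2:ℝ) ≤ n := by exact_mod_cast hn
  have : ((n : ℝ) - 1) / ((n : ℝ) + 1) < 1 := by
    rw [div_lt_one (by linarith)]; linarith
  linarith

lemma circle_abs {w z : ℂ} (hz : ‖z‖ = 1) :
    ‖1 - (starRingEnd ℂ) w * z‖ = ‖z - w‖ := by
  have : (starRingEnd ℂ) z * (z - w) = (starRingEnd ℂ) (1 - (starRingEnd ℂ) w * z) := by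
    have hz2 : (starRingEnd ℂ) z * z = ((1:ℝ):ℂ) := by
      rw [← Complex.normSq_eq_conj_mul_self, ← Complex.sq_norm, hz]; norm_num
    simp [mul_sub, hz2, map_sub, map_mul]; ring
  have h := congrArg (‖·‖) this
  rw [norm_mul, Complex.norm_conj, Complex.norm_conj, hz, one_mul] at h
  exact h.symm

lemma denom_ne {w z : ℂ} (hw1 : ‖w‖ < 1) (hz : ‖z‖ = 1) :
    1 - (starRingEnd ℂ) w * z ≠ 0 := by
  intro h
  have : ‖(starRingEnd ℂ) w * z‖ = 1 := by
    have : (1:ℂ) = (starRingEnd ℂ) w * z := by linear_combination h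
    rw [← this]; simp
  rw [norm_mul, Complex.norm_conj, hz, mul_one] at this
  exact absurd this (ne_of_lt hw1)

lemma hasDerivAt_Blaschke {n : ℕ} (w z : ℂ) (hd : 1 - (starRingEnd ℂ) w * z ≠ 0) :
    HasDerivAt (fun z => ((z - w) / (1 - (starRingEnd ℂ) w * z)) ^ n)
      ((n : ℂ) * ((z - w) / (1 - (starRingEnd ℂ) w * z)) ^ (n - 1) *
        ((1 - (starRingEnd ℂ) w * w) / (1 - (starRingEnd ℂ) w * z) ^ 2)) z := by
  have h1 : HasDerivAt (fun z : ℂ => z - w) 1 z := (hasDerivAt_id z).sub_const w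
  have h2 : HasDerivAt (fun z : ℂ => 1 - (starRingEnd ℂ) w * z) (-(starRingEnd ℂ) w) z := by
    simpa using ((hasDerivAt_id z).const_mul ((starRingEnd ℂ) w)).const_sub 1
  have hφ := h1.div h2 hd
  have := hφ.pow n
  exact this.congr_deriv (by simp only [Pi.div_apply]; ring)

lemma part1 {n : ℕ} {w : ℂ} (hn : 2 ≤ n)
    (hw : ‖w‖ < ((n : ℝ) - 1) / ((n : ℝ) + 1)) :
    ∀ z : ℂ, ‖z‖ = 1 →
      1 < ‖deriv (fun z => ((z - w) / (1 - (starRingEnd ℂ) w * z)) ^ n) z‖ := by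
  intro z hz
  have hw1 : ‖w‖ < 1 := s_lt_one hn hw
  have hd : 1 - (starRingEnd ℂ) w * z ≠ 0 := denom_ne hw1 hz
  rw [(hasDerivAt_Blaschke w z hd).deriv]
  have habsφ : ‖(z - w) / (1 - (starRingEnd ℂ) w * z)‖ = 1 := by
    have hzw : ‖z - w‖ ≠ 0 := by
      rw [← circle_abs hz]; exact norm_ne_zero_iff.mpr hd
    rw [norm_div, circle_abs hz, div_self hzw]
  have hnum : ‖1 - (starRingEnd ℂ) w * w‖ = 1 - ‖w‖ ^ 2 := by
    have : 1 - (starRingEnd ℂ) w * w = ((1 - ‖w‖ ^ 2 : ℝ) : ℂ) := by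
      have h2 : ((‖w‖ ^ 2 : ℝ) : ℂ) = (starRingEnd ℂ) w * w := by
        rw [← Complex.normSq_eq_norm_sq, Complex.normSq_eq_conj_mul_self]
      rw [← h2]
      push_cast
      ring
    rw [this, Complex.norm_real, Real.norm_eq_abs, _root_.abs_of_nonneg (by nlinarith [hw1, norm_nonneg w])]
  rw [norm_mul, norm_mul, norm_div, norm_pow, habsφ, one_pow, mul_one, Complex.norm_natCast,
    hnum, norm_pow]
  have hdle : ‖1 - (starRingEnd ℂ) w * z‖ ≤ 1 + ‖w‖ := by
    calc ‖1 - (starRingEnd ℂ) w * z‖ ≤ ‖(1:ℂ)‖ + ‖(starRingEnd ℂ) w * z‖ := by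
          simpa [sub_eq_add_neg] using norm_add_le 1 (-((starRingEnd ℂ) w * z))
      _ = 1 + ‖w‖ := by simp [hz]
  have hdpos : 0 < ‖1 - (starRingEnd ℂ) w * z‖ := norm_pos_iff.mpr hd
  have hkey := key_ineq hn hw
  rw [← mul_div_assoc, lt_div_iff₀ (by positivity), one_mul]
  calc ‖1 - (starRingEnd ℂ) w * z‖ ^ 2 ≤ (1 + ‖w‖)^2 := by
        nlinarith [hdle, hdpos]
    _ < n * (1 - ‖w‖ ^ 2) := hkey

noncomputable def gB (n : ℕ) (w : ℂ) (θ : ℝ) : ℝ :=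
  ((n:ℝ) - 1) * θ + 2 * n * Real.arctan
    ((w.re * Real.sin θ - w.im * Real.cos θ) / (1 - (w.re * Real.cos θ + w.im * Real.sin θ)))

lemma trig_id (a b c s : ℝ) (h : c^2 + s^2 = 1) :
    (a*c+b*s)^2 + (a*s-b*c)^2 = a^2+b^2 := by linear_combination (a^2+b^2) * h

lemma ND_id (w : ℂ) (θ : ℝ) :
    (w.re * Real.cos θ + w.im * Real.sin θ)^2 + (w.re * Real.sin θ - w.im * Real.cos θ)^2
      = ‖w‖ ^ 2 := by
  rw [Complex.sq_norm, Complex.normSq_apply]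
  have := trig_id w.re w.im (Real.cos θ) (Real.sin θ) (by
    have := Real.sin_sq_add_cos_sq θ; linarith)
  linarith [this]

lemma D_pos {w : ℂ} (hw1 : ‖w‖ < 1) (θ : ℝ) :
    0 < 1 - (w.re * Real.cos θ + w.im * Real.sin θ) := by
  have h := ND_id w θ
  have h0 : 0 ≤ ‖w‖ := norm_nonneg w
  nlinarith [sq_nonneg (w.re * Real.sin θ - w.im * Real.cos θ)]

lemma u_polar {w : ℂ} (hw1 : ‖w‖ < 1) (θ : ℝ) :
    1 - w * Complex.exp (-(θ:ℂ) * Complex.I) =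
      (Real.sqrt ((1 - (w.re * Real.cos θ + w.im * Real.sin θ))^2
          + (w.re * Real.sin θ - w.im * Real.cos θ)^2) : ℂ) *
        Complex.exp ((Real.arctan ((w.re * Real.sin θ - w.im * Real.cos θ)
          / (1 - (w.re * Real.cos θ + w.im * Real.sin θ))) : ℂ) * Complex.I) := by
  set a := w.re
  set b := w.im
  set N := a * Real.sin θ - b * Real.cos θ with hN
  set D := 1 - (a * Real.cos θ + b * Real.sin θ) with hD
  have hDpos : 0 < D := D_pos hw1 θ
  have hSpos : 0 < D^2 + N^2 := by positivity
  have h1q : 1 + (N/D)^2 = (D^2 + N^2) / D^2 := by field_simp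
  have hsq : Real.sqrt (1 + (N/D)^2) = Real.sqrt (D^2+N^2) / D := by
    rw [h1q, Real.sqrt_div (by positivity), Real.sqrt_sq hDpos.le]
  have hsqrtpos0 : 0 < Real.sqrt (D^2+N^2) := Real.sqrt_pos.mpr hSpos
  have hcos : Real.cos (Real.arctan (N/D)) = D / Real.sqrt (D^2+N^2) := by
    rw [Real.cos_arctan, hsq, one_div_div]
  have hsin : Real.sin (Real.arctan (N/D)) = N / Real.sqrt (D^2+N^2) := by
    rw [Real.sin_arctan, hsq]
    field_simp
  have hsqrtpos : 0 < Real.sqrt (D^2+N^2) := Real.sqrt_pos.mpr hSpos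
  have hexp : Complex.exp (-(θ:ℂ) * Complex.I) = (Real.cos θ : ℂ) - (Real.sin θ : ℂ) * Complex.I := by
    rw [show (-(θ:ℂ) * Complex.I) = ((-θ : ℝ) : ℂ) * Complex.I by push_cast; ring,
      Complex.exp_mul_I]
    rw [Complex.ofReal_neg, Complex.cos_neg, Complex.sin_neg, ← Complex.ofReal_cos,
      ← Complex.ofReal_sin]
    ring
  rw [hexp, Complex.exp_mul_I, ← Complex.ofReal_cos, ← Complex.ofReal_sin, hcos, hsin]
  apply Complex.ext <;>
  · simp [Complex.mul_re, Complex.mul_im, Complex.sub_re, Complex.sub_im,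
      Complex.cos_ofReal_re, Complex.sin_ofReal_re]
    field_simp
    try ring

lemma fixed_gives_int {n : ℕ} {w z : ℂ} (hw1 : ‖w‖ < 1) (hz : ‖z‖ = 1)
    (hfix : ((z - w) / (1 - (starRingEnd ℂ) w * z)) ^ n = z) :
    ∃ k : ℤ, gB n w (Complex.arg z) = 2 * Real.pi * k := by
  set θ := Complex.arg z with hθ
  have hzexp : z = Complex.exp ((θ:ℂ) * Complex.I) := by
    have := Complex.norm_mul_exp_arg_mul_I z
    rw [hz] at this
    simpa using this.symm
  have hconj : (starRingEnd ℂ) z = Complex.exp (-(θ:ℂ) * Complex.I) := by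
    rw [hzexp, ← Complex.exp_conj]
    congr 1
    simp [Complex.conj_ofReal]
  set N := w.re * Real.sin θ - w.im * Real.cos θ with hN
  set D := 1 - (w.re * Real.cos θ + w.im * Real.sin θ) with hD
  set α := Real.arctan (N / D) with hα
  set r := Real.sqrt (D^2 + N^2) with hr
  have hDpos : 0 < D := D_pos hw1 θ
  have hSpos : 0 < D^2 + N^2 := by positivity
  have hrpos : 0 < r := Real.sqrt_pos.mpr hSpos
  have hu : 1 - w * (starRingEnd ℂ) z = (r:ℂ) * Complex.exp ((α:ℂ) * Complex.I) := by
    rw [hconj]; exact u_polar hw1 θ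
  -- z - w = z * u ; 1 - conj w * z = conj u
  have hzz : z * (starRingEnd ℂ) z = 1 := by
    rw [Complex.mul_conj]
    rw [← Complex.sq_norm, hz]
    norm_num
  have hnum : z - w = z * (1 - w * (starRingEnd ℂ) z) := by
    rw [mul_sub, mul_one, ← mul_assoc, mul_comm z w, mul_assoc, hzz, mul_one]
  have hden : 1 - (starRingEnd ℂ) w * z = (starRingEnd ℂ) (1 - w * (starRingEnd ℂ) z) := by
    simp [map_sub, map_mul]
  have hconju : (starRingEnd ℂ) (1 - w * (starRingEnd ℂ) z)
      = (r:ℂ) * Complex.exp (-(α:ℂ) * Complex.I) := by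
    rw [hu, map_mul, ← Complex.exp_conj]
    congr 1
    · simp [Complex.conj_ofReal]
    · congr 1
      simp [Complex.conj_ofReal]
  have hφ : (z - w) / (1 - (starRingEnd ℂ) w * z)
      = Complex.exp ((θ:ℂ) * Complex.I + 2 * (α:ℂ) * Complex.I) := by
    have hrne : (r:ℂ) ≠ 0 := by exact_mod_cast hrpos.ne'
    rw [hnum, hden, hconju, hu, hzexp]
    rw [div_eq_iff (mul_ne_zero hrne (Complex.exp_ne_zero _))]
    have e1 : Complex.exp ((θ:ℂ) * Complex.I) * ((r:ℂ) * Complex.exp ((α:ℂ) * Complex.I))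
        = (r:ℂ) * Complex.exp ((θ:ℂ) * Complex.I + (α:ℂ) * Complex.I) := by
      rw [Complex.exp_add]; ring
    have e2 : Complex.exp ((θ:ℂ) * Complex.I + 2 * (α:ℂ) * Complex.I)
          * ((r:ℂ) * Complex.exp (-(α:ℂ) * Complex.I))
        = (r:ℂ) * Complex.exp ((θ:ℂ) * Complex.I + (α:ℂ) * Complex.I) := by
      calc Complex.exp ((θ:ℂ) * Complex.I + 2 * (α:ℂ) * Complex.I)
            * ((r:ℂ) * Complex.exp (-(α:ℂ) * Complex.I))
          = (r:ℂ) * (Complex.exp ((θ:ℂ) * Complex.I + 2 * (α:ℂ) * Complex.I)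
            * Complex.exp (-(α:ℂ) * Complex.I)) := by ring
        _ = (r:ℂ) * Complex.exp (((θ:ℂ) * Complex.I + 2 * (α:ℂ) * Complex.I)
            + (-(α:ℂ) * Complex.I)) := by rw [← Complex.exp_add]
        _ = (r:ℂ) * Complex.exp ((θ:ℂ) * Complex.I + (α:ℂ) * Complex.I) := by
            congr 1
            ring
    rw [e1, e2]
  -- now use the fixed point equation
  rw [hφ, ← Complex.exp_nat_mul] at hfix
  have hone : Complex.exp ((n:ℂ) * ((θ:ℂ) * Complex.I + 2 * (α:ℂ) * Complex.I)
      - (θ:ℂ) * Complex.I) = 1 := by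
    rw [Complex.exp_sub, hfix, ← hzexp, div_self]
    rw [hzexp]
    exact Complex.exp_ne_zero _
  rw [Complex.exp_eq_one_iff] at hone
  obtain ⟨k, hk⟩ := hone
  refine ⟨k, ?_⟩
  have hI : ((((n:ℝ) - 1) * θ + 2 * (n:ℝ) * α : ℝ) : ℂ) * Complex.I
      = (((2 * Real.pi * (k:ℝ)) : ℝ) : ℂ) * Complex.I := by
    push_cast
    push_cast at hk
    linear_combination hk
  have := mul_right_cancel₀ Complex.I_ne_zero hI
  have hreal : ((n:ℝ) - 1) * θ + 2 * (n:ℝ) * α = 2 * Real.pi * (k:ℝ) :=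
    Complex.ofReal_injective this
  simpa [gB] using hreal

lemma gB_strictMono {n : ℕ} {w : ℂ} (hn : 2 ≤ n)
    (hw : ‖w‖ < ((n : ℝ) - 1) / ((n : ℝ) + 1)) : StrictMono (gB n w) := by
  have hw1 : ‖w‖ < 1 := s_lt_one hn hw
  apply strictMono_of_deriv_pos
  intro θ
  set a := w.re
  set b := w.im
  set N := a * Real.sin θ - b * Real.cos θ with hN
  set D := 1 - (a * Real.cos θ + b * Real.sin θ) with hD
  set c := a * Real.cos θ + b * Real.sin θ with hc
  have hDpos : 0 < D := D_pos hw1 θ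
  have hSpos : 0 < D^2 + N^2 := by positivity
  have hNder : HasDerivAt (fun θ : ℝ => a * Real.sin θ - b * Real.cos θ) c θ := by
    have h1 := (Real.hasDerivAt_sin θ).const_mul a
    have h2 := (Real.hasDerivAt_cos θ).const_mul b
    exact (h1.sub h2).congr_deriv (by rw [hc]; ring)
  have hDder : HasDerivAt (fun θ : ℝ => 1 - (a * Real.cos θ + b * Real.sin θ)) N θ := by
    have h1 := (Real.hasDerivAt_cos θ).const_mul a
    have h2 := (Real.hasDerivAt_sin θ).const_mul b
    have h3 := (h1.add h2).const_sub 1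
    exact h3.congr_deriv (by ring)
  have hq : HasDerivAt (fun θ : ℝ => (a * Real.sin θ - b * Real.cos θ)
      / (1 - (a * Real.cos θ + b * Real.sin θ))) ((c * D - N * N) / D ^ 2) θ :=
    hNder.div hDder hDpos.ne'
  have harct : HasDerivAt (fun θ : ℝ => Real.arctan ((a * Real.sin θ - b * Real.cos θ)
      / (1 - (a * Real.cos θ + b * Real.sin θ))))
      (1 / (1 + (N / D) ^ 2) * ((c * D - N * N) / D ^ 2)) θ := by
    have := (Real.hasDerivAt_arctan (N / D)).comp θ hq
    exact this
  have hgder : HasDerivAt (gB n w)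
      (((n:ℝ) - 1) + 2 * n * (1 / (1 + (N / D) ^ 2) * ((c * D - N * N) / D ^ 2))) θ := by
    have hlin : HasDerivAt (fun θ : ℝ => ((n:ℝ) - 1) * θ) ((n:ℝ) - 1) θ := by
      simpa using (hasDerivAt_id θ).const_mul ((n:ℝ) - 1)
    exact hlin.add (harct.const_mul (2 * (n:ℝ)))
  rw [hgder.deriv]
  have heq : ((n:ℝ) - 1) + 2 * n * (1 / (1 + (N / D) ^ 2) * ((c * D - N * N) / D ^ 2))
      = (((n:ℝ) - 1) * (D^2 + N^2) + 2 * n * (c * D - N^2)) / (D^2 + N^2) := by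
    have h2 : D^2 + N^2 ≠ 0 := hSpos.ne'
    have h3 : (1:ℝ) + (N/D)^2 ≠ 0 := by positivity
    field_simp
  rw [heq]
  apply div_pos _ hSpos
  have hid : c^2 + N^2 = ‖w‖ ^ 2 := ND_id w θ
  have hs0 : 0 ≤ ‖w‖ := norm_nonneg w
  have hn' : (2:ℝ) ≤ n := by exact_mod_cast hn
  have h1 : ‖w‖ * ((n:ℝ)+1) < (n:ℝ) - 1 := by
    rw [div_eq_mul_inv] at hw
    calc ‖w‖ * ((n:ℝ)+1) < (((n:ℝ)-1) * ((n:ℝ)+1)⁻¹) * ((n:ℝ)+1) := by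
          apply mul_lt_mul_of_pos_right hw (by linarith)
      _ = (n:ℝ) - 1 := by field_simp
  have hcge : -(‖w‖) ≤ c := by nlinarith [sq_nonneg (c + ‖w‖), sq_nonneg N]
  have hDval : D = 1 - c := rfl
  rw [hDval]
  nlinarith [hid, hcge, hs0, h1, hn', sq_nonneg N, sq_nonneg (‖w‖ + c)]

lemma gB_period {n : ℕ} (w : ℂ) :
    gB n w Real.pi = gB n w (-Real.pi) + 2 * Real.pi * ((n:ℝ) - 1) := by
  simp [gB, Real.sin_pi, Real.cos_pi, Real.sin_neg, Real.cos_neg]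
  ring

open Polynomial in
noncomputable def pB (n : ℕ) (w : ℂ) : Polynomial ℂ :=
  (X - C w)^n - X * (1 - C ((starRingEnd ℂ) w) * X)^n

open Polynomial in
lemma pB_eval (n : ℕ) (w z : ℂ) :
    (pB n w).eval z = (z - w)^n - z * (1 - (starRingEnd ℂ) w * z)^n := by
  simp [pB]

open Polynomial in
lemma pB_natDegree {n : ℕ} {w : ℂ} (hn : 2 ≤ n) (hw0 : w ≠ 0) :
    (pB n w).natDegree = n + 1 := by
  have hcw : (starRingEnd ℂ) w ≠ 0 := by simpa using hw0
  have hq : (1 - C ((starRingEnd ℂ) w) * X : Polynomial ℂ) = C (-(starRingEnd ℂ) w) * X + C 1 := by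
    simp [map_neg]
    ring
  have hqdeg : (1 - C ((starRingEnd ℂ) w) * X : Polynomial ℂ).natDegree = 1 := by
    rw [hq]
    exact natDegree_linear (neg_ne_zero.mpr hcw)
  have hqne : (1 - C ((starRingEnd ℂ) w) * X : Polynomial ℂ) ≠ 0 := by
    intro h
    rw [h] at hqdeg
    simp at hqdeg
  have hM : (X * (1 - C ((starRingEnd ℂ) w) * X)^n : Polynomial ℂ).natDegree = n + 1 := by
    rw [natDegree_mul X_ne_zero (pow_ne_zero n hqne), natDegree_pow, hqdeg, natDegree_X]
    ring
  have hMne : (X * (1 - C ((starRingEnd ℂ) w) * X)^n : Polynomial ℂ) ≠ 0 :=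
    mul_ne_zero X_ne_zero (pow_ne_zero n hqne)
  have hAdeg : ((X - C w)^n : Polynomial ℂ).degree = n := by
    rw [degree_pow, degree_X_sub_C]
    simp
  have hlt : ((X - C w)^n : Polynomial ℂ).degree
      < (X * (1 - C ((starRingEnd ℂ) w) * X)^n : Polynomial ℂ).degree := by
    rw [hAdeg, degree_eq_natDegree hMne, hM]
    exact_mod_cast Nat.lt_succ_self n
  have := degree_sub_eq_right_of_degree_lt hlt
  rw [pB]
  have h2 := natDegree_eq_of_degree_eq this
  rw [h2, hM]
  try rfl

open Polynomial in
lemma pB_ne_zero {n : ℕ} {w : ℂ} (hn : 2 ≤ n) (hw0 : w ≠ 0) : pB n w ≠ 0 := by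
  intro h
  have := pB_natDegree hn hw0
  rw [h] at this
  simp at this

open Polynomial in
lemma pB_roots_card {n : ℕ} {w : ℂ} (hn : 2 ≤ n) (hw0 : w ≠ 0) :
    (pB n w).roots.card = n + 1 := by
  rw [← pB_natDegree hn hw0]
  exact splits_iff_card_roots.mp (IsAlgClosed.splits (pB n w))

open Polynomial in
lemma pB_derivative_eval (n : ℕ) (w z : ℂ) :
    (Polynomial.derivative (pB n w)).eval z
      = n * (z - w)^(n-1) - (1 - (starRingEnd ℂ) w * z)^n
        + n * (starRingEnd ℂ) w * z * (1 - (starRingEnd ℂ) w * z)^(n-1) := by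
  rw [pB]
  rw [map_sub, derivative_mul, derivative_pow, derivative_pow, derivative_X_sub_C]
  simp [derivative_X]
  ring

lemma denom_ne_lt {w z : ℂ} (hw1 : ‖w‖ < 1) (hz : ‖z‖ < 1) :
    1 - (starRingEnd ℂ) w * z ≠ 0 := by
  intro h
  have h1 : (1:ℂ) = (starRingEnd ℂ) w * z := by linear_combination h
  have : ‖(starRingEnd ℂ) w * z‖ = 1 := by rw [← h1]; simp
  rw [norm_mul, Complex.norm_conj] at this
  nlinarith [norm_nonneg w, norm_nonneg z]

lemma abs_one_sub_conj_sq {w : ℂ} (hw1 : ‖w‖ < 1) :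
    ‖1 - (starRingEnd ℂ) w * w‖ = 1 - ‖w‖ ^ 2 := by
  have h2 : ((‖w‖ ^ 2 : ℝ) : ℂ) = (starRingEnd ℂ) w * w := by
    rw [← Complex.normSq_eq_norm_sq, Complex.normSq_eq_conj_mul_self]
  have : 1 - (starRingEnd ℂ) w * w = ((1 - ‖w‖ ^ 2 : ℝ) : ℂ) := by
    rw [← h2]; push_cast; ring
  rw [this, Complex.norm_real, Real.norm_eq_abs,
    _root_.abs_of_nonneg (by nlinarith [norm_nonneg w])]

open Polynomial in
lemma pB_deriv_ne_zero {n : ℕ} {w z : ℂ} (hn : 2 ≤ n)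
    (hw : ‖w‖ < ((n : ℝ) - 1) / ((n : ℝ) + 1))
    (hz : ‖z‖ = 1) (hroot : (pB n w).IsRoot z) :
    (Polynomial.derivative (pB n w)).eval z ≠ 0 := by
  have hw1 : ‖w‖ < 1 := s_lt_one hn hw
  have hd : 1 - (starRingEnd ℂ) w * z ≠ 0 := denom_ne hw1 hz
  have hzw : z - w ≠ 0 := by
    intro h
    have : z = w := by linear_combination h
    rw [this] at hz
    exact absurd hz (ne_of_lt hw1)
  obtain ⟨m, rfl⟩ : ∃ m, n = m + 1 := ⟨n - 1, by omega⟩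
  have hR : (z - w)^(m+1) = z * (1 - (starRingEnd ℂ) w * z)^(m+1) := by
    have := hroot
    rw [IsRoot, pB_eval] at this
    linear_combination this
  intro hE
  rw [pB_derivative_eval] at hE
  have hfac : (z - w) * (((m:ℂ)+1) * (z - w)^(m+1-1)
      - (1 - (starRingEnd ℂ) w * z)^(m+1)
      + ((m:ℂ)+1) * (starRingEnd ℂ) w * z * (1 - (starRingEnd ℂ) w * z)^(m+1-1))
      = (1 - (starRingEnd ℂ) w * z)^m
        * (((m:ℂ)+1) * z * (1 - (starRingEnd ℂ) w * w)
          - (z - w) * (1 - (starRingEnd ℂ) w * z)) := by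
    simp only [Nat.add_sub_cancel]
    linear_combination ((m:ℂ)+1) * hR
  have hcast : ((m+1 : ℕ):ℂ) = (m:ℂ)+1 := by push_cast; ring
  rw [hcast] at hE
  rw [hE, mul_zero] at hfac
  have h0 : ((m:ℂ)+1) * z * (1 - (starRingEnd ℂ) w * w)
      - (z - w) * (1 - (starRingEnd ℂ) w * z) = 0 := by
    rcases mul_eq_zero.mp hfac.symm with h | h
    · exact absurd h (pow_ne_zero m hd)
    · exact h
  have heq : ((m:ℂ)+1) * z * (1 - (starRingEnd ℂ) w * w)
      = (z - w) * (1 - (starRingEnd ℂ) w * z) := by linear_combination h0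
  have habs := congrArg (‖·‖) heq
  rw [norm_mul, norm_mul, norm_mul, hz, circle_abs hz, abs_one_sub_conj_sq hw1] at habs
  have hm1 : ‖(m:ℂ)+1‖ = (m:ℝ)+1 := by
    rw [show ((m:ℂ)+1) = ((m+1:ℕ):ℂ) by push_cast; ring, Complex.norm_natCast]
    push_cast; ring
  rw [hm1] at habs
  have hkey := key_ineq hn hw
  have hdle : ‖1 - (starRingEnd ℂ) w * z‖ ≤ 1 + ‖w‖ := by
    calc ‖1 - (starRingEnd ℂ) w * z‖
        ≤ ‖(1:ℂ)‖ + ‖(starRingEnd ℂ) w * z‖ := by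
          simpa [sub_eq_add_neg] using norm_add_le 1 (-((starRingEnd ℂ) w * z))
      _ = 1 + ‖w‖ := by simp [hz]
  have hcast2 : ((m+1 : ℕ):ℝ) = (m:ℝ)+1 := by push_cast; ring
  rw [hcast2] at hkey
  rw [circle_abs hz] at hdle
  nlinarith [norm_nonneg (z - w), norm_nonneg w]

open Polynomial in
lemma pB_roots_nodup {n : ℕ} {w : ℂ} (hn : 2 ≤ n)
    (hw : ‖w‖ < ((n : ℝ) - 1) / ((n : ℝ) + 1)) (hw0 : w ≠ 0)
    (hall : ∀ z ∈ (pB n w).roots, ‖z‖ = 1) : (pB n w).roots.Nodup := by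
  rw [Multiset.nodup_iff_count_le_one]
  intro z
  by_cases hz : z ∈ (pB n w).roots
  · rw [count_roots]
    by_contra hcount
    push_neg at hcount
    have h2 : 2 ≤ rootMultiplicity z (pB n w) := hcount
    have hdvd : (X - C z)^2 ∣ pB n w :=
      dvd_trans (pow_dvd_pow _ h2) (pow_rootMultiplicity_dvd _ z)
    obtain ⟨q, hq⟩ := hdvd
    have hroot : (pB n w).IsRoot z := isRoot_of_mem_roots hz
    have hder := pB_deriv_ne_zero hn hw (hall z hz) hroot
    apply hder
    rw [hq, derivative_mul, derivative_X_sub_C_sq]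
    simp
  · rw [Multiset.count_eq_zero_of_notMem hz]
    omega

open Polynomial in
lemma part3 {n : ℕ} {w : ℂ} (hn : 2 ≤ n)
    (hw : ‖w‖ < ((n : ℝ) - 1) / ((n : ℝ) + 1)) :
    ∃ z₀ : ℂ, ‖z₀‖ < 1 ∧ ((z₀ - w) / (1 - (starRingEnd ℂ) w * z₀)) ^ n = z₀ := by
  have hw1 : ‖w‖ < 1 := s_lt_one hn hw
  have hn0 : n ≠ 0 := by omega
  by_cases hw0 : w = 0
  · refine ⟨0, by simp, ?_⟩
    simp [hw0, zero_pow hn0]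
  by_contra hno
  push_neg at hno
  -- every root of pB is on the unit circle
  have hfix_of_root : ∀ z : ℂ, (pB n w).IsRoot z → 1 - (starRingEnd ℂ) w * z ≠ 0 →
      ((z - w) / (1 - (starRingEnd ℂ) w * z)) ^ n = z := by
    intro z hroot hd
    rw [IsRoot, pB_eval] at hroot
    rw [div_pow]
    rw [div_eq_iff (pow_ne_zero n hd)]
    linear_combination hroot
  have hall : ∀ z ∈ (pB n w).roots, ‖z‖ = 1 := by
    intro z hz
    have hroot : (pB n w).IsRoot z := isRoot_of_mem_roots hz
    rcases lt_trichotomy (‖z‖) 1 with h | h | h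
    · exfalso
      exact hno z h (hfix_of_root z hroot (denom_ne_lt hw1 h))
    · exact h
    · exfalso
      -- the reflected point is a root inside the disc
      have hz0 : z ≠ 0 := by
        intro h0; rw [h0] at h; norm_num at h
      have hcz : (starRingEnd ℂ) z ≠ 0 := by simpa using hz0
      set z' := ((starRingEnd ℂ) z)⁻¹ with hz'
      have habs' : ‖z'‖ < 1 := by
        rw [hz', norm_inv, Complex.norm_conj]
        rw [inv_lt_one_iff₀]
        right; exact h
      have hroot' : (pB n w).IsRoot z' := by
        rw [IsRoot, pB_eval]
        have hR : (z - w)^n = z * (1 - (starRingEnd ℂ) w * z)^n := by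
          have := hroot; rw [IsRoot, pB_eval] at this; linear_combination this
        have hRc := congrArg (starRingEnd ℂ) hR
        simp only [map_pow, map_mul, map_sub, map_one, Complex.conj_conj] at hRc
        -- hRc : (conj z - conj w)^n = conj z * (1 - w * conj z)^n
        rw [hz']
        have e1 : ((starRingEnd ℂ) z)⁻¹ - w = ((starRingEnd ℂ) z)⁻¹ * (1 - w * (starRingEnd ℂ) z) := by
          linear_combination w * (inv_mul_cancel₀ hcz)
        have e2 : 1 - (starRingEnd ℂ) w * ((starRingEnd ℂ) z)⁻¹
            = ((starRingEnd ℂ) z)⁻¹ * ((starRingEnd ℂ) z - (starRingEnd ℂ) w) := by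
          linear_combination -(inv_mul_cancel₀ hcz)
        rw [e1, e2, mul_pow, mul_pow, hRc]
        linear_combination (-(((starRingEnd ℂ) z)⁻¹ ^ n * (1 - w * (starRingEnd ℂ) z) ^ n)) * inv_mul_cancel₀ hcz
      exact hno z' habs' (hfix_of_root z' hroot'
        (denom_ne_lt hw1 habs'))
  -- roots are simple, so we get n+1 distinct fixed points on the circle
  have hnodup := pB_roots_nodup hn hw hw0 hall
  set S := (pB n w).roots.toFinset with hS
  have hScard : S.card = n + 1 := by
    rw [hS, Multiset.toFinset_card_eq_card_iff_nodup.mpr hnodup, pB_roots_card hn hw0]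
  -- the counting function
  have hπ : (0:ℝ) < Real.pi := Real.pi_pos
  set A := gB n w (-Real.pi) with hA
  set m0 : ℤ := ⌊A / (2 * Real.pi)⌋ with hm0
  have hmono := gB_strictMono hn hw
  have hFex : ∀ z ∈ S, ∃ k : ℤ, gB n w (Complex.arg z) = 2 * Real.pi * k := by
    intro z hzS
    have hzr : z ∈ (pB n w).roots := Multiset.mem_toFinset.mp hzS
    have hz1 : ‖z‖ = 1 := hall z hzr
    exact fixed_gives_int hw1 hz1
      (hfix_of_root z (isRoot_of_mem_roots hzr) (denom_ne hw1 hz1))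
  classical
  set F : ℂ → ℤ := fun z =>
    if h : ∃ k : ℤ, gB n w (Complex.arg z) = 2 * Real.pi * k then h.choose else 0 with hF
  have hFval : ∀ z ∈ S, gB n w (Complex.arg z) = 2 * Real.pi * (F z) := by
    intro z hzS
    have h := hFex z hzS
    simp only [hF, dif_pos h]
    exact h.choose_spec
  have hFmem : ∀ z ∈ S, F z ∈ Finset.Ioc m0 (m0 + ((n:ℤ) - 1)) := by
    intro z hzS
    have hval := hFval z hzS
    have harg1 : -Real.pi < Complex.arg z := Complex.neg_pi_lt_arg z
    have harg2 : Complex.arg z ≤ Real.pi := Complex.arg_le_pi z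
    have hlow : A < 2 * Real.pi * (F z) := by
      rw [← hval]
      exact hmono harg1
    have hhigh : 2 * Real.pi * (F z) ≤ A + 2 * Real.pi * ((n:ℝ) - 1) := by
      rw [← hval]
      calc gB n w (Complex.arg z) ≤ gB n w Real.pi := hmono.monotone harg2
        _ = A + 2 * Real.pi * ((n:ℝ) - 1) := by rw [gB_period]
    rw [Finset.mem_Ioc]
    constructor
    · rw [hm0]
      rw [Int.floor_lt]
      rw [div_lt_iff₀ (by positivity)]
      calc A < 2 * Real.pi * (F z) := hlow
        _ = (F z : ℝ) * (2 * Real.pi) := by ring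
    · have : ((F z : ℝ)) - ((n:ℝ) - 1) ≤ A / (2 * Real.pi) := by
        rw [le_div_iff₀ (by positivity)]
        nlinarith [hhigh]
      have h2 : (F z - ((n:ℤ) - 1) : ℤ) ≤ m0 := by
        rw [hm0, Int.le_floor]
        push_cast
        push_cast at this
        linarith
      linarith [h2]
  have hFinj : Set.InjOn F S := by
    intro z₁ h₁ z₂ h₂ hFeq
    have hv₁ := hFval z₁ h₁
    have hv₂ := hFval z₂ h₂
    have : gB n w (Complex.arg z₁) = gB n w (Complex.arg z₂) := by
      rw [hv₁, hv₂, hFeq]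
    have harg : Complex.arg z₁ = Complex.arg z₂ := hmono.injective this
    have hz₁ : ‖z₁‖ = 1 := hall z₁ (Multiset.mem_toFinset.mp h₁)
    have hz₂ : ‖z₂‖ = 1 := hall z₂ (Multiset.mem_toFinset.mp h₂)
    have e₁ := Complex.norm_mul_exp_arg_mul_I z₁
    have e₂ := Complex.norm_mul_exp_arg_mul_I z₂
    rw [hz₁] at e₁
    rw [hz₂] at e₂
    rw [← e₁, ← e₂, harg]
  have hcard := Finset.card_le_card_of_injOn F hFmem hFinj
  rw [hScard, Int.card_Ioc] at hcard
  have he : (m0 + ((n:ℤ) - 1) - m0) = (n:ℤ) - 1 := by ring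
  rw [he] at hcard
  have h2 : ((n:ℤ) - 1).toNat = n - 1 := by omega
  rw [h2] at hcard
  omega

theorem stmt_19 (n : ℕ) (hn : 2 ≤ n) (w : ℂ)
    (hw : ‖w‖ < ((n : ℝ) - 1) / ((n : ℝ) + 1))
    (B : ℂ → ℂ)
    (hB : B = fun z => ((z - w) / (1 - (starRingEnd ℂ) w * z)) ^ n) :
    (∀ z : ℂ, ‖z‖ = 1 → 1 < ‖deriv B z‖) ∧
      (¬ ∃ z : ℂ, ‖z‖ = 1 ∧ B z = z ∧ ‖deriv B z‖ ≤ 1) ∧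
      (∃ z₀ : ℂ, ‖z₀‖ < 1 ∧ B z₀ = z₀) := by
  subst hB
  refine ⟨part1 hn hw, ?_, ?_⟩
  · rintro ⟨z, hz, -, hle⟩
    exact absurd hle (not_le.mpr (part1 hn hw z hz))
  · obtain ⟨z₀, h1, h2⟩ := part3 hn hw
    exact ⟨z₀, h1, h2⟩
end
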